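/- Let G be a finite nonempty graph with no isolated vertices and let H be a connected complete bipartite graph with at least one edge. Then Γ(G □ H) ≤ max over v ∈ V(G) of min{2·d(v) + 2, 2·d₁(v) + 3}, where d(v) is the degree of v in G and d₁(v) = max{d(u) : u ∈ N_G(v)} is the maximum degree of a neighbor of v in G. -/

import Mathlib

open SimpleGraph

/-- A greedy `k`-coloring of `G`: a partition of the vertex set into nonempty stable sets
`S 0, …, S (k-1)` such that for all `j < i`, every vertex of `S i` has a neighbor in `S j`. -/
def IsGreedyColoring {V : Type*} (G : SimpleGraph V) (k : ℕ) (S : Fin k → Set V) : Prop :=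
  (∀ v : V, ∃! i, v ∈ S i) ∧
  (∀ i, (S i).Nonempty) ∧
  (∀ i, ∀ v ∈ S i, ∀ w ∈ S i, ¬ G.Adj v w) ∧
  (∀ i j : Fin k, j < i → ∀ v ∈ S i, ∃ w ∈ S j, G.Adj v w)

/-- The Grundy number `Γ(G)`: the largest `k` such that `G` has a greedy `k`-coloring. -/
noncomputable def grundy {V : Type*} [Fintype V] (G : SimpleGraph V) : ℕ :=
  sSup {k | ∃ S : Fin k → Set V, IsGreedyColoring G k S}

namespace GrundyAux

variable {α β : Type*}

/-- The set of colors appearing on the fiber `{v} × W`. -/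
def Cset {k : ℕ} (S : Fin k → Set (α × β)) (W : Set β) (v : α) : Set (Fin k) :=
  {i | ∃ x ∈ W, (v, x) ∈ S i}

variable {G : SimpleGraph α} {H : SimpleGraph β} {k : ℕ} {S : Fin k → Set (α × β)}
variable {T T' : Set β}

lemma other_side (hS : IsGreedyColoring (G.boxProd H) k S)
    (hd : ∀ x ∈ T, x ∉ T')
    (hadj : ∀ x y, H.Adj x y ↔ (x ∈ T ∧ y ∈ T') ∨ (x ∈ T' ∧ y ∈ T))
    {i j : Fin k} {v : α} {x : β} (hx : x ∈ T) (hvx : (v, x) ∈ S i)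
    (hji : j < i) (hj : j ∉ Cset S T' v) :
    ∃ u, G.Adj v u ∧ (u, x) ∈ S j := by
  obtain ⟨w, hw, hadjw⟩ := hS.2.2.2 i j hji (v, x) hvx
  rw [boxProd_adj] at hadjw
  rcases hadjw with ⟨h1, h2⟩ | ⟨h1, h2⟩
  · refine ⟨w.1, h1, ?_⟩
    rwa [show (w.1, x) = w from Prod.ext rfl h2]
  · exfalso
    rcases (hadj x w.2).1 h1 with ⟨_, hw2⟩ | ⟨hxT', _⟩
    · refine hj ⟨w.2, hw2, ?_⟩
      rwa [show (v, w.2) = w from Prod.ext h2 rfl]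
    · exact hd x hx hxT'

lemma disj (hS : IsGreedyColoring (G.boxProd H) k S)
    (hadj : ∀ x y, H.Adj x y ↔ (x ∈ T ∧ y ∈ T') ∨ (x ∈ T' ∧ y ∈ T))
    {v : α} {j : Fin k} (h1 : j ∈ Cset S T v) (h2 : j ∈ Cset S T' v) : False := by
  obtain ⟨x, hxT, hx⟩ := h1
  obtain ⟨y, hyT, hy⟩ := h2
  exact hS.2.2.1 j (v, x) hx (v, y) hy
    (boxProd_adj.2 (Or.inr ⟨(hadj x y).2 (Or.inl ⟨hxT, hyT⟩), rfl⟩))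

lemma row_count [Finite α] (hS : IsGreedyColoring (G.boxProd H) k S)
    (hd : ∀ x ∈ T, x ∉ T')
    (hadj : ∀ x y, H.Adj x y ↔ (x ∈ T ∧ y ∈ T') ∨ (x ∈ T' ∧ y ∈ T))
    {i : Fin k} {v : α} {x : β} (hx : x ∈ T) (hvx : (v, x) ∈ S i)
    (E : Set α) (hE : ∀ u ∈ E, ∀ j : Fin k, j < i → (u, x) ∉ S j) :
    {j : Fin k | j < i ∧ j ∉ Cset S T' v}.ncard ≤ (G.neighborSet v \ E).ncard := by
  classical
  haveI : Nonempty α := ⟨v⟩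
  have hex : ∀ j ∈ {j : Fin k | j < i ∧ j ∉ Cset S T' v}, ∃ u, G.Adj v u ∧ (u, x) ∈ S j :=
    fun j hj => other_side hS hd hadj hx hvx hj.1 hj.2
  choose! f hf1 hf2 using hex
  apply Set.ncard_le_ncard_of_injOn f
  · intro j hj
    exact ⟨hf1 j hj, fun hmem => hE _ hmem j hj.1 (hf2 j hj)⟩
  · intro j1 h1 j2 h2 hf
    have u1 := hf2 j1 h1
    have u2 := hf2 j2 h2
    rw [hf] at u1
    obtain ⟨i0, _, huniq⟩ := hS.1 (f j2, x)
    exact (huniq j1 u1).trans (huniq j2 u2).symm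

lemma ncard_Iio (i : Fin k) : (Set.Iio i).ncard = i.val := by
  classical
  rw [Set.ncard_eq_toFinset_card', Set.toFinset_Iio, Fin.card_Iio]

lemma count_split (i : Fin k) (C : Set (Fin k)) :
    (i : ℕ) ≤ C.ncard + {j : Fin k | j < i ∧ j ∉ C}.ncard := by
  have hsub : Set.Iio i ⊆ (C ∩ Set.Iio i) ∪ {j | j < i ∧ j ∉ C} := by
    intro j hj
    by_cases h : j ∈ C
    · exact Or.inl ⟨h, hj⟩
    · exact Or.inr ⟨hj, h⟩
  calc (i : ℕ) = (Set.Iio i).ncard := (ncard_Iio i).symm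
    _ ≤ ((C ∩ Set.Iio i) ∪ {j | j < i ∧ j ∉ C}).ncard :=
        Set.ncard_le_ncard hsub (Set.toFinite _)
    _ ≤ (C ∩ Set.Iio i).ncard + {j : Fin k | j < i ∧ j ∉ C}.ncard := Set.ncard_union_le _ _
    _ ≤ C.ncard + {j : Fin k | j < i ∧ j ∉ C}.ncard :=
        Nat.add_le_add_right (Set.ncard_le_ncard Set.inter_subset_left (Set.toFinite _)) _

lemma cset_card [Finite α] (hS : IsGreedyColoring (G.boxProd H) k S)
    (hd : ∀ x ∈ T, x ∉ T')
    (hadj : ∀ x y, H.Adj x y ↔ (x ∈ T ∧ y ∈ T') ∨ (x ∈ T' ∧ y ∈ T))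
    (v : α) :
    (Cset S T' v).ncard ≤ (G.neighborSet v).ncard + 1 := by
  classical
  rcases (Cset S T' v).eq_empty_or_nonempty with h | h
  · simp [h]
  obtain ⟨m, hm, hmax⟩ := Set.exists_max_image (Cset S T' v) id (Set.toFinite _) h
  obtain ⟨y, hyT', hvy⟩ := hm
  have hd' : ∀ x ∈ T', x ∉ T := fun x hx hh => hd x hh hx
  have hadj' : ∀ x y, H.Adj x y ↔ (x ∈ T' ∧ y ∈ T) ∨ (x ∈ T ∧ y ∈ T') := by
    intro x y; rw [hadj]; tauto
  have hsub : Cset S T' v ⊆ insert m {j : Fin k | j < m ∧ j ∉ Cset S T v} := by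
    intro j hj
    rcases eq_or_ne j m with rfl | hne
    · exact Set.mem_insert _ _
    · refine Set.mem_insert_of_mem _ ⟨lt_of_le_of_ne (hmax j hj) hne, fun hjT => ?_⟩
      exact disj hS hadj hjT hj
  calc (Cset S T' v).ncard ≤ (insert m {j : Fin k | j < m ∧ j ∉ Cset S T v}).ncard :=
        Set.ncard_le_ncard hsub (Set.toFinite _)
    _ ≤ {j : Fin k | j < m ∧ j ∉ Cset S T v}.ncard + 1 := Set.ncard_insert_le _ _
    _ ≤ (G.neighborSet v \ ∅).ncard + 1 := by
        have := row_count hS hd' hadj' hyT' hvy ∅ (by simp)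
        omega
    _ = (G.neighborSet v).ncard + 1 := by rw [Set.diff_empty]

lemma val_le [Finite α] (hS : IsGreedyColoring (G.boxProd H) k S)
    (hd : ∀ x ∈ T, x ∉ T')
    (hadj : ∀ x y, H.Adj x y ↔ (x ∈ T ∧ y ∈ T') ∨ (x ∈ T' ∧ y ∈ T))
    {i : Fin k} {v : α} {x : β} (hx : x ∈ T) (hvx : (v, x) ∈ S i)
    (E : Set α) (hE : ∀ u ∈ E, ∀ j : Fin k, j < i → (u, x) ∉ S j) :
    (i : ℕ) ≤ ((G.neighborSet v).ncard + 1) + (G.neighborSet v \ E).ncard :=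
  (count_split i (Cset S T' v)).trans
    (Nat.add_le_add (cset_card hS hd hadj v) (row_count hS hd hadj hx hvx E hE))

lemma main_aux [Finite α] (hG : ∀ v, ∃ u, G.Adj v u)
    (hd : ∀ x ∈ T, x ∉ T')
    (hadj : ∀ x y, H.Adj x y ↔ (x ∈ T ∧ y ∈ T') ∨ (x ∈ T' ∧ y ∈ T))
    (htot : ∀ y, y ∈ T ∨ y ∈ T')
    (hk : 0 < k) (hS : IsGreedyColoring (G.boxProd H) k S)
    {a : α} {x₀ : β} (hx₀ : x₀ ∈ T) (htop : (a, x₀) ∈ S ⟨k - 1, by omega⟩) :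
    k ≤ 2 * (G.neighborSet a).ncard + 2 ∧
      ∃ u, G.Adj a u ∧ k ≤ 2 * (G.neighborSet u).ncard + 3 := by
  classical
  have hd' : ∀ x ∈ T', x ∉ T := fun x hx hh => hd x hh hx
  have hadj' : ∀ x y, H.Adj x y ↔ (x ∈ T' ∧ y ∈ T) ∨ (x ∈ T ∧ y ∈ T') := by
    intro x y; rw [hadj]; tauto
  have hdeg : ∀ v : α, 1 ≤ (G.neighborSet v).ncard := by
    intro v
    obtain ⟨u, hu⟩ := hG v
    exact (Set.ncard_pos (Set.toFinite _)).2 ⟨u, hu⟩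
  have hb1 : k ≤ 2 * (G.neighborSet a).ncard + 2 := by
    have h := val_le hS hd hadj hx₀ htop ∅ (by simp)
    rw [Set.diff_empty] at h
    simp only [] at h
    omega
  refine ⟨hb1, ?_⟩
  by_contra hcase
  push_neg at hcase
  have hcase' : ∀ u, G.Adj a u → 2 * (G.neighborSet u).ncard + 4 ≤ k := by
    intro u hu; have := hcase u hu; omega
  obtain ⟨u₀, hu₀⟩ := hG a
  have hk6 : 6 ≤ k := by have := hcase' u₀ hu₀; have := hdeg u₀; omega
  -- any color on a row through a neighbor of `a`, whose fiber point at `a` has a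
  -- larger color, is small
  have hC1 : ∀ u, G.Adj a u → ∀ (y : β) (j i₀ : Fin k), (u, y) ∈ S j → (a, y) ∈ S i₀ →
      j ≤ i₀ → (j : ℕ) ≤ 2 * (G.neighborSet u).ncard := by
    intro u hu y j i₀ hjy hi₀y hji
    have hE : ∀ w ∈ ({a} : Set α), ∀ j' : Fin k, j' < j → (w, y) ∉ S j' := by
      intro w hw j' hj' hwy
      rw [Set.mem_singleton_iff] at hw
      rw [hw] at hwy
      obtain ⟨i1, _, huniq⟩ := hS.1 (a, y)
      have e1 := huniq j' hwy
      have e2 := huniq i₀ hi₀y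
      have hlt : j' < i₀ := lt_of_lt_of_le hj' hji
      rw [e1, e2] at hlt
      exact absurd hlt (lt_irrefl _)
    have hNa : a ∈ G.neighborSet u := hu.symm
    have hNcard : (G.neighborSet u \ {a}).ncard = (G.neighborSet u).ncard - 1 :=
      Set.ncard_diff_singleton_of_mem hNa
    have hdu := hdeg u
    rcases htot y with hy | hy
    · have h := val_le hS hd hadj hy hjy {a} hE
      rw [hNcard] at h
      omega
    · have h := val_le hS hd' hadj' hy hjy {a} hE
      rw [hNcard] at h
      omega
  set top : Fin k := ⟨k - 1, by omega⟩ with htopdef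
  have hkm : ∀ j : Fin k, ((j : ℕ) = k - 2 ∨ (j : ℕ) = k - 3) → j ∈ Cset S T' a := by
    intro j hj
    by_contra hnot
    have hlt : j < top := by
      rw [Fin.lt_def]
      show (j : ℕ) < k - 1
      omega
    obtain ⟨u, hu, hux⟩ := other_side hS hd hadj hx₀ htop hlt hnot
    have h1 := hC1 u hu x₀ j top hux htop (le_of_lt hlt)
    have h2 := hcase' u hu
    omega
  have hkm1mem := hkm ⟨k - 2, by omega⟩ (Or.inl rfl)
  obtain ⟨y₁, hy₁T', hay₁⟩ := hkm1mem
  have hkm2T : (⟨k - 3, by omega⟩ : Fin k) ∈ Cset S T a := by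
    by_contra hnot
    have hlt : (⟨k - 3, by omega⟩ : Fin k) < (⟨k - 2, by omega⟩ : Fin k) := by
      rw [Fin.lt_def]
      show k - 3 < k - 2
      omega
    obtain ⟨u, hu, huy⟩ := other_side hS hd' hadj' hy₁T' hay₁ hlt hnot
    have h1 := hC1 u hu y₁ _ _ huy hay₁ (le_of_lt hlt)
    have h2 := hcase' u hu
    have h3 : ((⟨k - 3, by omega⟩ : Fin k) : ℕ) = k - 3 := rfl
    omega
  exact disj hS hadj hkm2T (hkm ⟨k - 3, by omega⟩ (Or.inr rfl))

end GrundyAux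

/-- Let `G` be a finite nonempty graph with no isolated vertices and `H` a connected
complete bipartite graph with at least one edge (given by a bipartition `(s, sᶜ)` with
both parts nonempty).  Then `Γ(G □ H) ≤ max_{v ∈ V(G)} min (2·d(v) + 2) (2·d₁(v) + 3)`,
where `d(v)` is the degree of `v` and `d₁(v)` the maximum degree of a neighbor of `v`. -/
theorem grundy_boxProd_completeBipartite_le {α β : Type*} [Fintype α] [Fintype β]
    [Nonempty α] (G : SimpleGraph α) (hG : ∀ v, ∃ u, G.Adj v u)
    (H : SimpleGraph β) (s : Set β) (hs : s.Nonempty) (hsc : sᶜ.Nonempty)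
    (hH : ∀ x y, H.Adj x y ↔ ((x ∈ s ∧ y ∉ s) ∨ (x ∉ s ∧ y ∈ s))) :
    grundy (G.boxProd H) ≤
      sSup {m : ℕ | ∃ v : α,
        m = min (2 * (G.neighborSet v).ncard + 2)
          (2 * sSup ((fun u => (G.neighborSet u).ncard) '' G.neighborSet v) + 3)} := by
  classical
  set f : α → ℕ := fun v => min (2 * (G.neighborSet v).ncard + 2)
      (2 * sSup ((fun u => (G.neighborSet u).ncard) '' G.neighborSet v) + 3) with hf
  have hbdd : BddAbove {m : ℕ | ∃ v : α, m = f v} :=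
    Set.Finite.bddAbove ((Set.finite_range f).subset (by rintro m ⟨v, rfl⟩; exact ⟨v, rfl⟩))
  apply csSup_le'
  rintro k ⟨S, hS⟩
  rcases Nat.eq_zero_or_pos k with rfl | hk
  · exact Nat.zero_le _
  obtain ⟨⟨a, x₀⟩, htop⟩ := hS.2.1 ⟨k - 1, by omega⟩
  have key : k ≤ 2 * (G.neighborSet a).ncard + 2 ∧
      ∃ u, G.Adj a u ∧ k ≤ 2 * (G.neighborSet u).ncard + 3 := by
    by_cases hx : x₀ ∈ s
    · refine GrundyAux.main_aux hG (T := s) (T' := sᶜ) (fun x hx1 hx2 => hx2 hx1)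
        (fun x y => ?_) (fun y => em _) hk hS hx htop
      rw [hH x y]
      simp only [Set.mem_compl_iff]
    · refine GrundyAux.main_aux hG (T := sᶜ) (T' := s) (fun x hx1 hx2 => hx1 hx2)
        (fun x y => ?_) (fun y => (em (y ∈ s)).symm.imp (fun h => h) (fun h => h)) hk hS hx htop
      rw [hH x y]
      simp only [Set.mem_compl_iff]
      tauto
  obtain ⟨h1, u, hau, h2⟩ := key
  have hd1 : (G.neighborSet u).ncard ≤
      sSup ((fun u => (G.neighborSet u).ncard) '' G.neighborSet a) :=
    le_csSup (Set.Finite.bddAbove (Set.toFinite _)) ⟨u, hau, rfl⟩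
  have hka : k ≤ f a := le_min h1 (h2.trans (by omega))
  exact hka.trans (le_csSup hbdd ⟨a, rfl⟩)
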